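/- Let O be an internally triangulated biconnected outerplane graph whose only two vertices of degree 2 are s and t. Then at least one of the two vertices adjacent to s on the outer cycle has degree exactly 3 in O. -/

import Mathlib

set_option linter.unusedSectionVars false
set_option linter.unusedVariables false
set_option maxHeartbeats 1000000

/-- `x` lies strictly inside the clockwise arc from `a` to `b` on the cycle `ZMod n`. -/
def StrictArc {n : ℕ} (a b x : ZMod n) : Prop :=
  0 < (x - a).val ∧ (x - a).val < (b - a).val

/-- Two chords `{a,b}` and `{c,d}` of the cycle on `ZMod n` cross (interleave). -/
def ChordsCross {n : ℕ} (a b c d : ZMod n) : Prop :=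
  (StrictArc a b c ∧ StrictArc b a d) ∨ (StrictArc a b d ∧ StrictArc b a c)

namespace ITO



variable {n : ℕ} [NeZero n]

lemma val_one' (hn : 2 ≤ n) : (1 : ZMod n).val = 1 := by
  have : ((1:ℕ) : ZMod n).val = 1 := ZMod.val_cast_of_lt (by omega)
  simpa using this

lemma nat_mod_cases (x b a : ℕ) (hx : x < n) (hb : b < n) (ha : a < n)
    (h : (x + b) % n = a) : x + b = a ∨ x + b = a + n := by
  rcases Nat.lt_or_ge (x + b) n with h1 | h1
  · left; rwa [Nat.mod_eq_of_lt h1] at h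
  · right
    have h2 : (x + b) % n = x + b - n := by
      rw [Nat.mod_eq_sub_mod h1, Nat.mod_eq_of_lt (by omega)]
    omega

lemma val_sub_le {A B : ZMod n} (h : B.val ≤ A.val) : (A - B).val = A.val - B.val := by
  have h2 : ((A - B) + B) = A := by ring
  have h3 : ((A - B) + B).val = A.val := by rw [h2]
  rw [ZMod.val_add] at h3
  have := ZMod.val_lt (A - B); have := ZMod.val_lt B; have := ZMod.val_lt A
  rcases nat_mod_cases _ _ _ (by omega) (by omega) (by omega) h3 with h4 | h4 <;> omega

lemma val_sub_gt {A B : ZMod n} (h : A.val < B.val) : (A - B).val = A.val + n - B.val := by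
  have h2 : ((A - B) + B) = A := by ring
  have h3 : ((A - B) + B).val = A.val := by rw [h2]
  rw [ZMod.val_add] at h3
  have := ZMod.val_lt (A - B); have := ZMod.val_lt B; have := ZMod.val_lt A
  rcases nat_mod_cases _ _ _ (by omega) (by omega) (by omega) h3 with h4 | h4 <;> omega

lemma val_neg' {A : ZMod n} (h : A ≠ 0) : (-A).val = n - A.val := by
  have h0 : (0 : ZMod n).val = 0 := ZMod.val_zero
  have h1 : (0:ZMod n).val < A.val := by
    have := ZMod.val_pos.mpr h; omega
  have := val_sub_gt (A := (0:ZMod n)) (B := A) h1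
  simpa using this

lemma val_inj {A B : ZMod n} (h : A.val = B.val) : A = B := ZMod.val_injective n h

lemma sub_inj {u x y : ZMod n} (h : x - u = y - u) : x = y := by
  have := congrArg (· + u) h; simpa using this

/-- addition of positions relative to a base point -/
lemma pos_add {u x y : ZMod n} (h : (x - u).val + (y - x).val < n) :
    (y - u).val = (x - u).val + (y - x).val := by
  have : (x - u) + (y - x) = y - u := by ring
  rw [← this, ZMod.val_add_of_lt h]

/-- subtraction of positions relative to a base point -/
lemma pos_sub {u x y : ZMod n} (h : (x - u).val ≤ (y - u).val) :
    (y - x).val = (y - u).val - (x - u).val := by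
  have : (y - u) - (x - u) = y - x := by ring
  rw [← this, val_sub_le h]

lemma pos_sub_gt {u x y : ZMod n} (h : (y - u).val < (x - u).val) :
    (y - x).val = (y - u).val + n - (x - u).val := by
  have : (y - u) - (x - u) = y - x := by ring
  rw [← this, val_sub_gt h]

lemma not_strictArc_self_left (p q : ZMod n) : ¬ StrictArc p q p := by
  intro h; simp [StrictArc] at h
lemma not_strictArc_self_right (p q : ZMod n) : ¬ StrictArc p q q := by
  rintro ⟨h1, h2⟩; omega

lemma not_cc_self (p q : ZMod n) : ¬ ChordsCross p q p q := by
  rintro (⟨h, -⟩ | ⟨h, -⟩) <;> [exact not_strictArc_self_left p q h; exact not_strictArc_self_right p q h]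

lemma not_cc_self' (p q : ZMod n) : ¬ ChordsCross p q q p := by
  rintro (⟨h, -⟩ | ⟨h, -⟩) <;> [exact not_strictArc_self_right p q h; exact not_strictArc_self_left p q h]

lemma cc_swap₁ {a b c d : ZMod n} (h : ChordsCross a b c d) : ChordsCross b a c d := by
  rcases h with ⟨h1, h2⟩ | ⟨h1, h2⟩
  · exact Or.inr ⟨h2, h1⟩
  · exact Or.inl ⟨h2, h1⟩

lemma cc_swap₂ {a b c d : ZMod n} (h : ChordsCross a b c d) : ChordsCross a b d c := by
  rcases h with ⟨h1, h2⟩ | ⟨h1, h2⟩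
  · exact Or.inr ⟨h1, h2⟩
  · exact Or.inl ⟨h1, h2⟩

lemma cc_aux {a b c d : ZMod n} (h1 : StrictArc a b c) (h2 : StrictArc b a d) :
    StrictArc c d b ∧ StrictArc d c a := by
  obtain ⟨hc1, hc2⟩ := h1
  obtain ⟨hd1, hd2⟩ := h2
  set K := (b - a).val with hK
  set pc := (c - a).val with hpc
  have hab : b ≠ a := by
    intro h
    have h0 : (b - a).val = 0 := by rw [h, sub_self, ZMod.val_zero]
    omega
  have hKn : K < n := ZMod.val_lt _
  have hK' : (a - b).val = n - K := by
    have : a - b = -(b - a) := by ring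
    rw [this, val_neg' (sub_ne_zero.mpr hab)]
  rw [hK'] at hd2
  -- pd = position of d relative to a
  have hpd : (d - a).val = (d - b).val + K := by
    have := pos_add (u := a) (x := b) (y := d) (by omega)
    omega
  set pd := (d - a).val with hpdd
  have hpdn : pd < n := ZMod.val_lt _
  have h1 : pc < pd := by omega
  have hdc : (d - c).val = pd - pc := pos_sub (by omega)
  have hbc : (b - c).val = K - pc := pos_sub (by omega)
  have hac : (a - c).val = n - pc := by
    have := pos_sub_gt (u := a) (y := a) (x := c) (by rw [sub_self, ZMod.val_zero]; exact hc1)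
    simpa using this
  have had : (a - d).val = n - pd := by
    have := pos_sub_gt (u := a) (y := a) (x := d) (by rw [sub_self, ZMod.val_zero]; omega)
    simpa using this
  have hcd : (c - d).val = n - pd + pc := by
    have := pos_sub_gt (u := a) (y := c) (x := d) (by omega)
    omega
  refine ⟨⟨?_, ?_⟩, ?_, ?_⟩ <;> omega

lemma cc_comm {a b c d : ZMod n} (h : ChordsCross a b c d) : ChordsCross c d a b := by
  rcases h with ⟨h1, h2⟩ | ⟨h1, h2⟩
  · obtain ⟨g1, g2⟩ := cc_aux h1 h2
    exact Or.inr ⟨g1, g2⟩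
  · obtain ⟨g1, g2⟩ := cc_aux h1 h2
    exact Or.inl ⟨g2, g1⟩

lemma val_two' (hn : 4 ≤ n) : (2 : ZMod n).val = 2 := by
  have : ((2:ℕ) : ZMod n).val = 2 := ZMod.val_cast_of_lt (by omega)
  rw [← this]; norm_cast
lemma val_three' (hn : 4 ≤ n) : (3 : ZMod n).val = 3 := by
  have : ((3:ℕ) : ZMod n).val = 3 := ZMod.val_cast_of_lt (by omega)
  rw [← this]; norm_cast

lemma one_ne (hn : 4 ≤ n) : (1 : ZMod n) ≠ 0 := by
  intro h; have := val_one' (n := n) (by omega); rw [h, ZMod.val_zero] at this; omega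
lemma two_ne (hn : 4 ≤ n) : (2 : ZMod n) ≠ 0 := by
  intro h; have := val_two' (n := n) hn; rw [h, ZMod.val_zero] at this; omega
lemma three_ne (hn : 4 ≤ n) : (3 : ZMod n) ≠ 0 := by
  intro h; have := val_three' (n := n) hn; rw [h, ZMod.val_zero] at this; omega
lemma diff_ne {x y : ZMod n} (h : x - y ≠ 0) : x ≠ y := by
  intro he; exact h (by rw [he, sub_self])

lemma pos_inj {u x y : ZMod n} (h : (x - u).val = (y - u).val) : x = y :=
  sub_inj (val_inj h)

lemma pos_zero (u : ZMod n) : (u - u).val = 0 := by simp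

section Counting

variable (H : SimpleGraph (ZMod n)) [DecidableRel H.Adj]

def Dp (u : ZMod n) (k : ℕ) : Finset (ZMod n × ZMod n) :=
  Finset.univ.filter
    (fun z => H.Adj z.1 z.2 ∧ (z.1 - u).val < (z.2 - u).val ∧ (z.2 - u).val ≤ k)

lemma mem_Dp {u : ZMod n} {k : ℕ} {z : ZMod n × ZMod n} :
    z ∈ Dp H u k ↔ H.Adj z.1 z.2 ∧ (z.1 - u).val < (z.2 - u).val ∧ (z.2 - u).val ≤ k := by
  simp [Dp]

lemma lemL (hn : 4 ≤ n)
    (NC : ∀ a b c d : ZMod n, H.Adj a b → H.Adj c d → ¬ChordsCross a b c d) :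
    ∀ k, 1 ≤ k → k ≤ n - 1 → ∀ u : ZMod n, (Dp H u k).card ≤ 2 * k - 1 := by
  intro k
  induction k using Nat.strong_induction_on with
  | _ k ih =>
  intro hk1 hkn u
  rcases Nat.lt_or_ge k 2 with hk2 | hk2
  · -- k = 1
    have hk : k = 1 := by omega
    subst hk
    have hsub : Dp H u 1 ⊆ {(u, u + 1)} := by
      intro z hz
      rw [mem_Dp] at hz
      obtain ⟨hadj, hlt, hle⟩ := hz
      have h1 : (z.1 - u).val = 0 := by omega
      have h2 : (z.2 - u).val = 1 := by omega
      have hz1 : z.1 = u := pos_inj (by rw [h1, pos_zero])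
      have hz2 : z.2 = u + 1 := by
        apply pos_inj (u := u)
        rw [h2]
        simp [val_one' (by omega : 2 ≤ n)]
      simp [Finset.mem_singleton, Prod.ext_iff, hz1, hz2]
    calc (Dp H u 1).card ≤ _ := Finset.card_le_card hsub
      _ = 1 := Finset.card_singleton _
  · -- k ≥ 2
    set v := u + (k : ZMod n) with hv
    have hkltn : k < n := by omega
    have hvu : (v - u).val = k := by
      rw [hv, add_sub_cancel_left, ZMod.val_cast_of_lt hkltn]
    set Zs := Finset.univ.filter
      (fun z : ZMod n => H.Adj v z ∧ 1 ≤ (z - u).val ∧ (z - u).val ≤ k - 2) with hZs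
    by_cases hZ : Zs.Nonempty
    · -- case B
      obtain ⟨z₀, hz₀mem, hmin⟩ := Finset.exists_min_image Zs (fun z => (z - u).val) hZ
      rw [hZs, Finset.mem_filter] at hz₀mem
      obtain ⟨-, hadj₀, hm1, hm2⟩ := hz₀mem
      set m := (z₀ - u).val with hm
      have hsub : Dp H u k ⊆ insert (u, v) (Dp H u m ∪ Dp H z₀ (k - m)) := by
        intro z hz
        rw [mem_Dp] at hz
        obtain ⟨hadj, hlt, hle⟩ := hz
        set p1 := (z.1 - u).val with hp1
        set p2 := (z.2 - u).val with hp2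
        rcases le_or_gt p2 m with hc1 | hc1
        · exact Finset.mem_insert_of_mem (Finset.mem_union_left _
            (by rw [mem_Dp]; exact ⟨hadj, hlt, hc1⟩))
        rcases le_or_gt m p1 with hc2 | hc2
        · refine Finset.mem_insert_of_mem (Finset.mem_union_right _ ?_)
          rw [mem_Dp]
          have e1 : (z.1 - z₀).val = p1 - m := pos_sub (by omega)
          have e2 : (z.2 - z₀).val = p2 - m := pos_sub (by omega)
          rw [e1, e2]
          exact ⟨hadj, by omega, by omega⟩
        -- p1 < m < p2
        rcases Nat.lt_or_ge p2 k with hc3 | hc3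
        · -- crossing contradiction
          exfalso
          have e1 : (z.2 - z₀).val = p2 - m := by
            rw [pos_sub (u := u) (by omega)]
          have e2 : (v - z₀).val = k - m := by
            rw [pos_sub (u := u) (by omega), hvu]
          have e3 : (z.1 - v).val = p1 + n - k := by
            rw [pos_sub_gt (u := u) (by omega), hvu]
          have e4 : (z₀ - v).val = m + n - k := by
            rw [pos_sub_gt (u := u) (by omega), hvu]
          have hsb : StrictArc z₀ v z.2 := by
            constructor <;> rw [e1] <;> [skip; rw [e2]] <;> omega
          have hsa : StrictArc v z₀ z.1 := by
            constructor <;> rw [e3] <;> [skip; rw [e4]] <;> omega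
          exact NC z₀ v z.1 z.2 hadj₀.symm hadj (Or.inr ⟨hsb, hsa⟩)
        · -- p2 = k, so z.2 = v
          have hp2k : p2 = k := by omega
          have hz2v : z.2 = v := pos_inj (by rw [← hp2, hp2k, hvu])
          rcases Nat.eq_zero_or_pos p1 with hc4 | hc4
          · have hz1u : z.1 = u := pos_inj (by rw [← hp1, hc4, pos_zero])
            have : z = (u, v) := Prod.ext hz1u hz2v
            rw [this]; exact Finset.mem_insert_self _ _
          · exfalso
            have : z.1 ∈ Zs := by
              rw [hZs, Finset.mem_filter]
              refine ⟨Finset.mem_univ _, ?_, by omega, by omega⟩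
              rw [← hz2v]; exact hadj.symm
            have := hmin z.1 this
            omega
      have hcard1 := ih m (by omega) (by omega) (by omega) u
      have hcard2 := ih (k - m) (by omega) (by omega) (by omega) z₀
      calc (Dp H u k).card ≤ _ := Finset.card_le_card hsub
        _ ≤ (Dp H u m ∪ Dp H z₀ (k - m)).card + 1 := Finset.card_insert_le _ _
        _ ≤ ((Dp H u m).card + (Dp H z₀ (k - m)).card) + 1 := by
            have := Finset.card_union_le (Dp H u m) (Dp H z₀ (k - m)); omega
        _ ≤ 2 * k - 1 := by omega
    · -- case A
      set w := u + ((k - 1 : ℕ) : ZMod n) with hw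
      have hwu : (w - u).val = k - 1 := by
        rw [hw, add_sub_cancel_left, ZMod.val_cast_of_lt (by omega)]
      have hsub : Dp H u k ⊆ insert (u, v) (insert (w, v) (Dp H u (k - 1))) := by
        intro z hz
        rw [mem_Dp] at hz
        obtain ⟨hadj, hlt, hle⟩ := hz
        set p1 := (z.1 - u).val with hp1
        set p2 := (z.2 - u).val with hp2
        rcases le_or_gt p2 (k - 1) with hc1 | hc1
        · exact Finset.mem_insert_of_mem (Finset.mem_insert_of_mem
            (by rw [mem_Dp]; exact ⟨hadj, hlt, hc1⟩))
        have hp2k : p2 = k := by omega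
        have hz2v : z.2 = v := pos_inj (by rw [← hp2, hp2k, hvu])
        have hnoZ : ¬ (1 ≤ p1 ∧ p1 ≤ k - 2) := by
          intro ⟨ha, hb⟩
          apply hZ
          refine ⟨z.1, ?_⟩
          rw [hZs, Finset.mem_filter]
          refine ⟨Finset.mem_univ _, ?_, ha, hb⟩
          rw [← hz2v]; exact hadj.symm
        rcases Nat.eq_zero_or_pos p1 with hc4 | hc4
        · have hz1u : z.1 = u := pos_inj (by rw [← hp1, hc4, pos_zero])
          have : z = (u, v) := Prod.ext hz1u hz2v
          rw [this]; exact Finset.mem_insert_self _ _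
        · have hp1k : p1 = k - 1 := by omega
          have hz1w : z.1 = w := pos_inj (by rw [← hp1, hp1k, hwu])
          have : z = (w, v) := Prod.ext hz1w hz2v
          rw [this]
          exact Finset.mem_insert_of_mem (Finset.mem_insert_self _ _)
      have hcard1 := ih (k - 1) (by omega) (by omega) (by omega) u
      calc (Dp H u k).card ≤ _ := Finset.card_le_card hsub
        _ ≤ (insert (w, v) (Dp H u (k - 1))).card + 1 := Finset.card_insert_le _ _
        _ ≤ ((Dp H u (k - 1)).card + 1) + 1 := by
            have := Finset.card_insert_le (w, v) (Dp H u (k - 1)); omega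
        _ ≤ 2 * k - 1 := by omega

end Counting


section Counting2

variable (H : SimpleGraph (ZMod n)) [DecidableRel H.Adj]


lemma edge_card (hn : 4 ≤ n) (u : ZMod n) :
    H.edgeFinset.card = (Dp H u (n - 1)).card := by
  refine (Finset.card_bij (fun z _ => s(z.1, z.2)) ?_ ?_ ?_).symm
  · intro z hz
    rw [mem_Dp] at hz
    simpa [SimpleGraph.mem_edgeFinset] using hz.1
  · intro z1 h1 z2 h2 heq
    rw [mem_Dp] at h1 h2
    rw [Sym2.eq_iff] at heq
    rcases heq with ⟨e1, e2⟩ | ⟨e1, e2⟩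
    · exact Prod.ext e1 e2
    · exfalso
      rw [e1, e2] at h1
      omega
  · intro e he
    induction e using Sym2.ind with
    | _ x y =>
      rw [SimpleGraph.mem_edgeFinset, SimpleGraph.mem_edgeSet] at he
      have hxy : x ≠ y := H.ne_of_adj he
      have hne : (x - u).val ≠ (y - u).val := fun h => hxy (pos_inj h)
      have hxlt : (x - u).val < n := ZMod.val_lt _
      have hylt : (y - u).val < n := ZMod.val_lt _
      rcases lt_or_gt_of_ne hne with hlt | hlt
      · exact ⟨(x, y), by rw [mem_Dp]; exact ⟨he, hlt, Nat.le_pred_of_lt hylt⟩, rfl⟩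
      · exact ⟨(y, x), by rw [mem_Dp]; exact ⟨he.symm, hlt, Nat.le_pred_of_lt hxlt⟩, Sym2.eq_swap⟩

lemma lemM (hn : 4 ≤ n)
    (NC : ∀ a b c d : ZMod n, H.Adj a b → H.Adj c d → ¬ChordsCross a b c d) :
    H.edgeFinset.card ≤ 2 * n - 3 := by
  rw [edge_card H hn 0]
  have := lemL H hn NC (n - 1) (by omega) (by omega) 0
  omega

lemma extend_contradiction (hn : 4 ≤ n)
    (NC : ∀ a b c d : ZMod n, H.Adj a b → H.Adj c d → ¬ChordsCross a b c d)
    (hcard : H.edgeFinset.card = 2 * n - 3) (p q : ZMod n) (hpq : p ≠ q)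
    (hnadj : ¬ H.Adj p q)
    (hnew : ∀ c d : ZMod n, H.Adj c d → ¬ChordsCross p q c d) : False := by
  let G' : SimpleGraph (ZMod n) :=
    { Adj := fun x y => H.Adj x y ∨ (x = p ∧ y = q) ∨ (x = q ∧ y = p)
      symm := by
        constructor
        rintro x y (h | ⟨rfl, rfl⟩ | ⟨rfl, rfl⟩)
        · exact Or.inl h.symm
        · exact Or.inr (Or.inr ⟨rfl, rfl⟩)
        · exact Or.inr (Or.inl ⟨rfl, rfl⟩)
      loopless := by
        constructor
        rintro x (h | ⟨rfl, rfl⟩ | ⟨rfl, h⟩)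
        · exact H.irrefl h
        · exact hpq rfl
        · exact hpq h.symm }
  haveI : DecidableRel G'.Adj := fun x y =>
    inferInstanceAs (Decidable (H.Adj x y ∨ (x = p ∧ y = q) ∨ (x = q ∧ y = p)))
  have hnew' : ∀ c d : ZMod n, H.Adj c d → ¬ChordsCross q p c d := by
    intro c d h hcc
    exact hnew c d h (cc_swap₁ hcc)
  have NC' : ∀ a b c d : ZMod n, G'.Adj a b → G'.Adj c d → ¬ChordsCross a b c d := by
    rintro a b c d (h1 | ⟨ha, hb⟩ | ⟨ha, hb⟩) (h2 | ⟨hc, hd⟩ | ⟨hc, hd⟩) hcc <;>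
      [skip; rw [hc, hd] at hcc; rw [hc, hd] at hcc; rw [ha, hb] at hcc;
       rw [ha, hb, hc, hd] at hcc; rw [ha, hb, hc, hd] at hcc; rw [ha, hb] at hcc;
       rw [ha, hb, hc, hd] at hcc; rw [ha, hb, hc, hd] at hcc]
    · exact NC a b c d h1 h2 hcc
    · exact hnew a b h1 (cc_comm hcc)
    · exact hnew' a b h1 (cc_comm hcc)
    · exact hnew c d h2 hcc
    · exact not_cc_self p q hcc
    · exact not_cc_self' p q hcc
    · exact hnew' c d h2 hcc
    · exact not_cc_self p q (cc_swap₁ hcc)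
    · exact not_cc_self' p q (cc_swap₁ hcc)
  have hE : G'.edgeFinset = insert s(p, q) H.edgeFinset := by
    ext e
    induction e using Sym2.ind with
    | _ x y =>
      simp only [SimpleGraph.mem_edgeFinset, SimpleGraph.mem_edgeSet, Finset.mem_insert,
        Sym2.eq_iff]
      show (H.Adj x y ∨ (x = p ∧ y = q) ∨ (x = q ∧ y = p)) ↔ _
      tauto
  have hnm : s(p, q) ∉ H.edgeFinset := by
    simpa [SimpleGraph.mem_edgeFinset, SimpleGraph.mem_edgeSet] using hnadj
  have hcard' : G'.edgeFinset.card = 2 * n - 3 + 1 := by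
    rw [hE, Finset.card_insert_of_notMem hnm, hcard]
  have := lemM G' hn NC'
  omega

lemma edge_closed
    (NC : ∀ a b c d : ZMod n, H.Adj a b → H.Adj c d → ¬ChordsCross a b c d)
    {u v z z' : ZMod n} (huv : H.Adj u v) (hsz : StrictArc u v z) (hzz' : H.Adj z z') :
    (z' - u).val ≤ (v - u).val := by
  by_contra hgt
  push_neg at hgt
  obtain ⟨hz1, hz2⟩ := hsz
  have hK : 0 < (v - u).val := by omega
  have h1 : (z' - v).val = (z' - u).val - (v - u).val := pos_sub (u := u) (by omega)
  have h2 : (u - v).val = n - (v - u).val := by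
    have := pos_sub_gt (u := u) (y := u) (x := v) (by simpa using hK)
    simpa using this
  have hlt : (z' - u).val < n := ZMod.val_lt _
  have hsa : StrictArc v u z' := by
    constructor
    · omega
    · rw [h1, h2]; omega
  exact NC u v z z' huv hzz' (Or.inl ⟨⟨hz1, hz2⟩, hsa⟩)

lemma sublemE (hn : 4 ≤ n)
    (NC : ∀ a b c d : ZMod n, H.Adj a b → H.Adj c d → ¬ChordsCross a b c d) :
    ∀ k, 2 ≤ k → ∀ u v : ZMod n, H.Adj u v → (v - u).val = k →
      ∃ w : ZMod n, (0 < (w - u).val ∧ (w - u).val < k) ∧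
        ∀ y : ZMod n, H.Adj w y → y = w - 1 ∨ y = w + 1 := by
  intro k
  induction k using Nat.strong_induction_on with
  | _ k ih =>
  intro hk2 u v huv hk
  have hkn : k < n := hk ▸ ZMod.val_lt _
  by_cases hA : ∃ w y : ZMod n, (0 < (w - u).val ∧ (w - u).val < k) ∧ H.Adj w y ∧
      ¬(y = w - 1 ∨ y = w + 1)
  · obtain ⟨w, y, hwpos, hwy, hy⟩ := hA
    set pw := (w - u).val with hpw
    set py := (y - u).val with hpy
    have hpyk : py ≤ k := by
      have := edge_closed H NC huv (z := w) (z' := y) ⟨hwpos.1, hk ▸ hwpos.2⟩ hwy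
      omega
    have hne : pw ≠ py := fun h => (H.ne_of_adj hwy) (pos_inj h)
    have hw1 : (w + 1 - u).val = pw + 1 := by
      have heq : w + 1 - u = (w - u) + 1 := by ring
      rw [heq, ZMod.val_add_of_lt (by rw [val_one' (by omega : 2 ≤ n)]; omega),
        val_one' (by omega)]
    have hwm1 : (w - 1 - u).val = pw - 1 := by
      have heq : w - 1 - u = (w - u) - 1 := by ring
      rw [heq, val_sub_le (by rw [val_one' (by omega : 2 ≤ n)]; omega), val_one' (by omega)]
    have hnp1 : py ≠ pw + 1 := fun h =>
      hy (Or.inr (pos_inj (u := u) (by rw [hw1]; omega)))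
    have hnm1 : pw ≠ py + 1 := fun h =>
      hy (Or.inl (pos_inj (u := u) (by rw [hwm1]; omega)))
    rcases lt_or_gt_of_ne hne with hlt | hlt
    · -- pw < py
      have hg2 : 2 ≤ py - pw := by omega
      have hgk : py - pw ≤ k - 1 := by omega
      have hyw : (y - w).val = py - pw := pos_sub (u := u) (by omega)
      obtain ⟨w'', hpos'', hch''⟩ := ih (py - pw) (by omega) hg2 w y hwy hyw
      refine ⟨w'', ⟨?_, ?_⟩, hch''⟩ <;>
      · have := pos_add (u := u) (x := w) (y := w'') (by omega)
        omega
    · -- py < pw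
      have hg2 : 2 ≤ pw - py := by omega
      have hgk : pw - py ≤ k - 1 := by omega
      have hyw : (w - y).val = pw - py := pos_sub (u := u) (by omega)
      obtain ⟨w'', hpos'', hch''⟩ := ih (pw - py) (by omega) hg2 y w hwy.symm hyw
      refine ⟨w'', ⟨?_, ?_⟩, hch''⟩ <;>
      · have := pos_add (u := u) (x := y) (y := w'') (by omega)
        omega
  · push_neg at hA
    refine ⟨u + 1, ⟨?_, ?_⟩, ?_⟩
    · rw [add_sub_cancel_left, val_one' (by omega)]; omega
    · rw [add_sub_cancel_left, val_one' (by omega)]; omega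
    · intro y hy
      by_contra hyn
      exact hyn (hA (u + 1) y ⟨by rw [add_sub_cancel_left, val_one' (by omega)]; omega,
        by rw [add_sub_cancel_left, val_one' (by omega)]; omega⟩ hy)


end Counting2

end ITO


open ITO in
theorem internally_triangulated_outerplane_neighbor_of_s_degree_three
    {n : ℕ} [NeZero n] (hn : 4 ≤ n)
    (G : SimpleGraph (ZMod n)) [DecidableRel G.Adj]
    (houter : ∀ i : ZMod n, G.Adj i (i + 1))
    (hnocross : ∀ e₁ ∈ G.edgeSet, ∀ e₂ ∈ G.edgeSet,
      ∀ a b c d : ZMod n, e₁ = s(a, b) → e₂ = s(c, d) → ¬ChordsCross a b c d)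
    (htriangulated : G.edgeFinset.card = 2 * n - 3)
    (s t : ZMod n) (hst : s ≠ t)
    (hdeg2 : ∀ v : ZMod n, G.degree v = 2 ↔ (v = s ∨ v = t)) :
    G.degree (s - 1) = 3 ∨ G.degree (s + 1) = 3 := by
  have NC : ∀ a b c d : ZMod n, G.Adj a b → G.Adj c d → ¬ChordsCross a b c d :=
    fun a b c d h1 h2 =>
      hnocross s(a, b) (G.mem_edgeSet.mpr h1) s(c, d) (G.mem_edgeSet.mpr h2) a b c d rfl rfl
  have v1 : (1 : ZMod n).val = 1 := val_one' (by omega)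
  have v2 : (2 : ZMod n).val = 2 := val_two' hn
  have v3 : (3 : ZMod n).val = 3 := val_three' hn
  set a := s - 1 with ha
  set b := s + 1 with hb
  -- basic vals of differences
  have hba : (b - a).val = 2 := by rw [show b - a = 2 by rw [ha, hb]; ring, v2]
  have hab : (a - b).val = n - 2 := by
    rw [show a - b = -2 by rw [ha, hb]; ring, val_neg' (two_ne hn), v2]
  have hsb : (s - b).val = n - 1 := by
    rw [show s - b = -1 by rw [hb]; ring, val_neg' (one_ne hn), v1]
  have hsa : (s - a).val = 1 := by rw [show s - a = 1 by rw [ha]; ring, v1]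
  have hasb : (a - 1 - b).val = n - 3 := by
    rw [show a - 1 - b = -3 by rw [ha, hb]; ring, val_neg' (three_ne hn), v3]
  -- adjacencies
  have hadj_as : G.Adj a s := by
    have := houter a; rwa [show a + 1 = s by rw [ha]; ring] at this
  have hadj_sb : G.Adj s b := by have := houter s; rwa [← hb] at this
  have hane : a ≠ b := by
    apply diff_ne; rw [show a - b = -2 by rw [ha, hb]; ring]
    simpa using two_ne hn
  -- step 1 : neighbors of s
  have hdegs : G.degree s = 2 := (hdeg2 s).mpr (Or.inl rfl)
  have hdeg_eq : ∀ v : ZMod n, G.degree v = (G.neighborFinset v).card := fun _ => rfl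
  have hnbhds : G.neighborFinset s = {a, b} := by
    refine (Finset.eq_of_subset_of_card_le ?_ ?_).symm
    · intro y hy
      rcases Finset.mem_insert.mp hy with rfl | hy
      · exact (SimpleGraph.mem_neighborFinset _ _ _).mpr hadj_as.symm
      · rw [Finset.mem_singleton] at hy; subst hy
        exact (SimpleGraph.mem_neighborFinset _ _ _).mpr hadj_sb
    · have hc2 : ({a, b} : Finset (ZMod n)).card = 2 := by
        rw [Finset.card_insert_of_notMem (by simpa using hane), Finset.card_singleton]
      rw [hc2, ← hdeg_eq s, hdegs]
  have adj_s : ∀ y : ZMod n, G.Adj s y → y = a ∨ y = b := by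
    intro y hy
    have : y ∈ G.neighborFinset s := (SimpleGraph.mem_neighborFinset _ _ _).mpr hy
    rw [hnbhds] at this
    simpa using this
  -- step 2 : the ear chord (a, b)
  have hadj_ab : G.Adj a b := by
    by_contra hK
    refine extend_contradiction G hn NC htriangulated a b hane hK ?_
    have aux : ∀ c d : ZMod n, G.Adj c d → ¬(StrictArc a b c ∧ StrictArc b a d) := by
      rintro c d hcd ⟨⟨hc1, hc2⟩, hd1, hd2⟩
      rw [hba] at hc2
      rw [hab] at hd2
      have hc : c = s := pos_inj (u := a) (by rw [hsa]; omega)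
      subst hc
      rcases adj_s d hcd with rfl | rfl
      · rw [hab] at hd2; omega
      · simp at hd1
    rintro c d hcd (⟨h1, h2⟩ | ⟨h1, h2⟩)
    · exact aux c d hcd ⟨h1, h2⟩
    · exact aux d c hcd.symm ⟨h1, h2⟩
  -- choose x : the neighbor of a inside the big region, closest to b
  set X := Finset.univ.filter
    (fun z : ZMod n => G.Adj a z ∧ 0 < (z - b).val ∧ (z - b).val < n - 2) with hX
  have hXne : X.Nonempty := by
    refine ⟨a - 1, ?_⟩
    rw [hX, Finset.mem_filter]
    refine ⟨Finset.mem_univ _, ?_, ?_, ?_⟩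
    · have := houter (a - 1)
      rw [show a - 1 + 1 = a by ring] at this
      exact this.symm
    · rw [hasb]; omega
    · rw [hasb]; omega
  obtain ⟨x, hxmem, hxmin⟩ := Finset.exists_min_image X (fun z => (z - b).val) hXne
  rw [hX, Finset.mem_filter] at hxmem
  obtain ⟨-, hax, hQ1, hQ2⟩ := hxmem
  set Q := (x - b).val with hQ
  have hxmin' : ∀ z : ZMod n, G.Adj a z → 0 < (z - b).val → (z - b).val < n - 2 →
      Q ≤ (z - b).val := by
    intro z h1 h2 h3
    exact hxmin z (by rw [hX, Finset.mem_filter]; exact ⟨Finset.mem_univ _, h1, h2, h3⟩)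
  have hbxval : (b - x).val = n - Q := by
    have := pos_sub_gt (u := b) (y := b) (x := x) (by rw [sub_self, ZMod.val_zero]; omega)
    rw [sub_self, ZMod.val_zero] at this
    omega
  have haxval : (a - x).val = n - 2 - Q := by
    have := pos_sub (u := b) (x := x) (y := a) (by rw [hab]; omega)
    rw [hab] at this; omega
  have hxaval : (x - a).val = Q + 2 := by
    have := pos_add (u := a) (x := b) (y := x) (by rw [hba]; omega)
    rw [hba] at this; omega
  -- step 3 : x is adjacent to b
  have hadj_bx : G.Adj b x := by
    by_contra hK
    have hbnex : b ≠ x := by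
      intro h; rw [hQ, ← h, sub_self, ZMod.val_zero] at hQ1; omega
    refine extend_contradiction G hn NC htriangulated b x hbnex hK ?_
    have aux : ∀ c d : ZMod n, G.Adj c d → ¬(StrictArc b x c ∧ StrictArc x b d) := by
      rintro c d hcd ⟨⟨hc1, hc2⟩, hd1, hd2⟩
      rw [hbxval] at hd2
      have hd3 : (d - b).val = Q + (d - x).val := pos_add (u := b) (x := x) (y := d) (by omega)
      set qc := (c - b).val with hqc
      set qd := (d - b).val with hqd
      have hqdn : qd < n := ZMod.val_lt _
      rcases Nat.lt_or_ge qd (n - 2) with hcase | hcase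
      · -- qd ≤ n - 3 : crossing with (a, x)
        have hca : (c - a).val = 2 + qc := by
          have := pos_add (u := a) (x := b) (y := c) (by rw [hba]; omega)
          rw [hba] at this; omega
        have hsa1 : StrictArc a x c :=
          ⟨by rw [hca]; omega, by rw [hca, hxaval]; omega⟩
        have hsa2 : StrictArc x a d := by
          constructor
          · omega
          · rw [haxval]; omega
        exact NC a x c d hax hcd (Or.inl ⟨hsa1, hsa2⟩)
      rcases Nat.lt_or_ge qd (n - 1) with hcase2 | hcase2
      · -- qd = n - 2 : d = a, contradicts minimality
        have hda : d = a := pos_inj (u := b) (by rw [← hqd, hab]; omega)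
        subst hda
        have := hxmin' c hcd.symm (by omega) (by omega)
        omega
      · -- qd = n - 1 : d = s
        have hds : d = s := pos_inj (u := b) (by rw [← hqd, hsb]; omega)
        subst hds
        rcases adj_s c hcd.symm with rfl | rfl
        · rw [hab] at hqc; omega
        · rw [sub_self, ZMod.val_zero] at hqc; omega
    rintro c d hcd (⟨h1, h2⟩ | ⟨h1, h2⟩)
    · exact aux c d hcd ⟨h1, h2⟩
    · exact aux d c hcd.symm ⟨h1, h2⟩
  -- step 4 : case analysis on x
  by_cases hx1 : x = b + 1
  · -- the neighbor b = s + 1 has degree 3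
    right
    have hadj_abp : G.Adj a (b + 1) := hx1 ▸ hax
    have hb1a : (b + 1 - a).val = 3 := by
      rw [show b + 1 - a = 3 by rw [ha, hb]; ring, v3]
    have hab1 : (a - (b + 1)).val = n - 3 := by
      rw [show a - (b + 1) = -3 by rw [ha, hb]; ring, val_neg' (three_ne hn), v3]
    have hnb : G.neighborFinset b = {a, s, b + 1} := by
      apply Finset.Subset.antisymm
      · intro y hy
        rw [SimpleGraph.mem_neighborFinset] at hy
        set qy := (y - b).val with hqy
        have hyne : qy ≠ 0 := by
          intro h0
          have : y = b := pos_inj (u := b) (by rw [← hqy, h0, sub_self, ZMod.val_zero])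
          exact G.irrefl (this ▸ hy)
        have hqyn : qy < n := ZMod.val_lt _
        simp only [Finset.mem_insert, Finset.mem_singleton]
        rcases Nat.lt_or_ge qy 2 with h | h
        · -- qy = 1 : y = b + 1
          right; right
          apply pos_inj (u := b)
          rw [← hqy, add_sub_cancel_left, v1]; omega
        rcases Nat.lt_or_ge qy (n - 2) with h2 | h2
        · -- 2 ≤ qy ≤ n - 3 : crossing
          exfalso
          have hs1 : StrictArc a (b + 1) b :=
            ⟨by rw [hba]; omega, by rw [hba, hb1a]; omega⟩
          have hs2 : StrictArc (b + 1) a y := by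
            have : (y - (b + 1)).val = qy - 1 := by
              have := pos_sub (u := b) (x := b + 1) (y := y)
                (by rw [add_sub_cancel_left, v1]; omega)
              rw [add_sub_cancel_left, v1] at this; omega
            exact ⟨by rw [this]; omega, by rw [this, hab1]; omega⟩
          exact NC a (b + 1) b y hadj_abp hy (Or.inl ⟨hs1, hs2⟩)
        rcases Nat.lt_or_ge qy (n - 1) with h3 | h3
        · -- qy = n - 2 : y = a
          left
          exact pos_inj (u := b) (by rw [← hqy, hab]; omega)
        · -- qy = n - 1 : y = s
          right; left
          exact pos_inj (u := b) (by rw [← hqy, hsb]; omega)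
      · intro y hy
        simp only [Finset.mem_insert, Finset.mem_singleton] at hy
        rw [SimpleGraph.mem_neighborFinset]
        rcases hy with rfl | rfl | rfl
        · exact hadj_ab.symm
        · exact hadj_sb.symm
        · exact houter b
    rw [hdeg_eq, hnb]
    have d1 : a ≠ s := by
      apply diff_ne; rw [show a - s = -1 by rw [ha]; ring]; simpa using one_ne hn
    have d2 : a ≠ b + 1 := by
      apply diff_ne; rw [show a - (b + 1) = -3 by rw [ha, hb]; ring]
      simpa using three_ne hn
    have d3 : s ≠ b + 1 := by
      apply diff_ne; rw [show s - (b + 1) = -2 by rw [hb]; ring]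
      simpa using two_ne hn
    rw [Finset.card_insert_of_notMem (by simp [d1, d2]),
      Finset.card_insert_of_notMem (by simpa using d3), Finset.card_singleton]
  by_cases hx2 : x = a - 1
  · -- the neighbor a = s - 1 has degree 3
    left
    have hadj_bam : G.Adj b (a - 1) := hx2 ▸ hadj_bx
    have hbam : (b - (a - 1)).val = 3 := by
      rw [show b - (a - 1) = 3 by rw [ha, hb]; ring, v3]
    have haam : (a - (a - 1)).val = 1 := by
      rw [show a - (a - 1) = 1 by ring, v1]
    have hama : (a - 1 - a).val = n - 1 := by
      rw [show a - 1 - a = -1 by ring, val_neg' (one_ne hn), v1]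
    have hnb : G.neighborFinset a = {a - 1, s, b} := by
      apply Finset.Subset.antisymm
      · intro y hy
        rw [SimpleGraph.mem_neighborFinset] at hy
        set ry := (y - a).val with hry
        have hyne : ry ≠ 0 := by
          intro h0
          have : y = a := pos_inj (u := a) (by rw [← hry, h0, sub_self, ZMod.val_zero])
          exact G.irrefl (this ▸ hy)
        have hryn : ry < n := ZMod.val_lt _
        simp only [Finset.mem_insert, Finset.mem_singleton]
        rcases Nat.lt_or_ge ry 2 with h | h
        · -- ry = 1 : y = s
          right; left
          exact pos_inj (u := a) (by rw [← hry, hsa]; omega)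
        rcases Nat.lt_or_ge ry 3 with h2 | h2
        · -- ry = 2 : y = b
          right; right
          exact pos_inj (u := a) (by rw [← hry, hba]; omega)
        rcases Nat.lt_or_ge ry (n - 1) with h3 | h3
        · -- 3 ≤ ry ≤ n - 2 : crossing
          exfalso
          have hs1 : StrictArc b (a - 1) y := by
            have : (y - b).val = ry - 2 := by
              have := pos_sub (u := a) (x := b) (y := y) (by rw [hba]; omega)
              rw [hba] at this; omega
            have hval : (a - 1 - b).val = n - 3 := hasb
            exact ⟨by rw [this]; omega, by rw [this, hval]; omega⟩
          have hs2 : StrictArc (a - 1) b a :=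
            ⟨by rw [haam]; omega, by rw [haam, hbam]; omega⟩
          exact NC b (a - 1) a y hadj_bam hy (Or.inr ⟨hs1, hs2⟩)
        · -- ry = n - 1 : y = a - 1
          left
          exact pos_inj (u := a) (by rw [← hry, hama]; omega)
      · intro y hy
        simp only [Finset.mem_insert, Finset.mem_singleton] at hy
        rw [SimpleGraph.mem_neighborFinset]
        rcases hy with rfl | rfl | rfl
        · have := houter (a - 1)
          rw [show a - 1 + 1 = a by ring] at this
          exact this.symm
        · exact hadj_as
        · exact hadj_ab
    rw [hdeg_eq, hnb]
    have d1 : a - 1 ≠ s := by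
      apply diff_ne; rw [show a - 1 - s = -2 by rw [ha]; ring]; simpa using two_ne hn
    have d2 : a - 1 ≠ b := by
      apply diff_ne; rw [show a - 1 - b = -3 by rw [ha, hb]; ring]
      simpa using three_ne hn
    have d3 : s ≠ b := by
      apply diff_ne; rw [show s - b = -1 by rw [hb]; ring]; simpa using one_ne hn
    rw [Finset.card_insert_of_notMem (by simp [d1, d2]),
      Finset.card_insert_of_notMem (by simpa using d3), Finset.card_singleton]
  · -- impossible : two more degree-2 vertices
    exfalso
    have hQne1 : Q ≠ 1 := by
      intro h
      exact hx1 (pos_inj (u := b) (by rw [← hQ, h, add_sub_cancel_left, v1]))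
    have hQnen3 : Q ≠ n - 3 := by
      intro h
      exact hx2 (pos_inj (u := b) (by rw [← hQ, h, hasb]))
    -- chordless vertex inside (b, x)
    obtain ⟨w₁, ⟨hw₁1, hw₁2⟩, hch₁⟩ := sublemE G hn NC Q (by omega) b x hadj_bx rfl
    -- chordless vertex inside (x, a)
    obtain ⟨w₂, ⟨hw₂1, hw₂2⟩, hch₂⟩ :=
      sublemE G hn NC (n - 2 - Q) (by omega) x a hax.symm haxval
    have cd2 : ∀ w : ZMod n, (∀ y : ZMod n, G.Adj w y → y = w - 1 ∨ y = w + 1) →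
        G.degree w = 2 := by
      intro w hch
      have hne : w - 1 ≠ w + 1 := by
        apply diff_ne; rw [show w - 1 - (w + 1) = -2 by ring]; simpa using two_ne hn
      have : G.neighborFinset w = {w - 1, w + 1} := by
        apply Finset.Subset.antisymm
        · intro y hy
          rw [SimpleGraph.mem_neighborFinset] at hy
          simpa using hch y hy
        · intro y hy
          simp only [Finset.mem_insert, Finset.mem_singleton] at hy
          rw [SimpleGraph.mem_neighborFinset]
          rcases hy with rfl | rfl
          · have := houter (w - 1)
            rw [show w - 1 + 1 = w by ring] at this
            exact this.symm
          · exact houter w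
      rw [hdeg_eq, this, Finset.card_insert_of_notMem (by simpa using hne),
        Finset.card_singleton]
    have hw₁t : w₁ = t := by
      rcases (hdeg2 w₁).mp (cd2 w₁ hch₁) with h | h
      · exfalso; rw [h, hsb] at hw₁2; omega
      · exact h
    have hsx : (s - x).val = n - 1 - Q := by
      have := pos_sub (u := b) (x := x) (y := s) (by rw [hsb]; omega)
      rw [hsb] at this; omega
    have hw₂t : w₂ = t := by
      rcases (hdeg2 w₂).mp (cd2 w₂ hch₂) with h | h
      · exfalso; rw [h, hsx] at hw₂2; omega
      · exact h
    have hw₂b : (w₂ - b).val = Q + (w₂ - x).val :=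
      pos_add (u := b) (x := x) (y := w₂) (by omega)
    have hww : w₂ = w₁ := hw₂t.trans hw₁t.symm
    rw [hww] at hw₂1 hw₂b
    omega
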